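/- Let G be a finite simple chordal graph that is not complete, with largest clique size d, and suppose all maximal cliques of G have cardinality d (i.e., the clique complex Δ(G) is pure). Then b_{κ̃(G)+1} = b_{κ̃(G)+2} = … = b_d. -/

import Mathlib

open Finset

/-- `G` is chordal: every cycle of length at least 4 has a chord, i.e. an edge
joining two non-consecutive vertices of the cycle. -/
def IsChordal {V : Type*} (G : SimpleGraph V) : Prop :=
  ∀ (n : ℕ), 4 ≤ n → ∀ f : ZMod n → V, Function.Injective f →
    (∀ i : ZMod n, G.Adj (f i) (f (i + 1))) →
    ∃ i j : ZMod n, i ≠ j ∧ i + 1 ≠ j ∧ j + 1 ≠ i ∧ G.Adj (f i) (f j)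

/-- The number of cliques of `G` with exactly `i` vertices. -/
noncomputable def cliqueCount {V : Type*} [Fintype V] (G : SimpleGraph V) (i : ℕ) : ℕ :=
  {s : Finset V | G.IsNClique i s}.ncard

/-- `W(G - Y)`: the number of connected components of the subgraph of `G` induced on the
complement of `Y`. -/
noncomputable def numComponents {V : Type*} [Fintype V] [DecidableEq V] (G : SimpleGraph V)
    (Y : Finset V) : ℕ :=
  Nat.card (G.induce (↑(Yᶜ) : Set V)).ConnectedComponent

/-- A vertex-cut of `G`: a set of vertices whose removal disconnects `G`. -/
def IsVertexCut {V : Type*} [Fintype V] [DecidableEq V] (G : SimpleGraph V) (Y : Finset V) :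
    Prop :=
  ¬ (G.induce (↑(Yᶜ) : Set V)).Connected

/-- The vertex connectivity `κ(G)`: the minimum cardinality of a vertex-cut. -/
noncomputable def vertexConnectivity {V : Type*} [Fintype V] [DecidableEq V]
    (G : SimpleGraph V) : ℕ :=
  sInf {k | ∃ Y : Finset V, IsVertexCut G Y ∧ Y.card = k}

/-- `s` is a maximal clique of `G`. -/
def IsMaxCliqueOf {V : Type*} (G : SimpleGraph V) (s : Finset V) : Prop :=
  G.IsClique (↑s : Set V) ∧ ∀ t : Finset V, G.IsClique (↑t : Set V) → s ⊆ t → s = t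

/-- A dominating `i`-clique of `G`: a set of `i`-cliques such that every maximal clique of
order at least `i` contains some member of the set. -/
def IsDominatingCliqueSet {V : Type*} (G : SimpleGraph V) (i : ℕ)
    (D : Finset (Finset V)) : Prop :=
  (∀ s ∈ D, G.IsNClique i s) ∧
    ∀ t : Finset V, IsMaxCliqueOf G t → i ≤ t.card → ∃ s ∈ D, s ⊆ t

/-- `d_i(G)`: the minimum cardinality of a dominating `i`-clique of `G`. -/
noncomputable def domNum {V : Type*} (G : SimpleGraph V) (i : ℕ) : ℕ :=
  sInf {k | ∃ D : Finset (Finset V), IsDominatingCliqueSet G i D ∧ D.card = k}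

/-- `κ̃(G)`: the maximum cardinality of the intersection of a pair of distinct maximal
cliques of `G`. -/
noncomputable def kappaTilde {V : Type*} [DecidableEq V] (G : SimpleGraph V) : ℕ :=
  sSup {k | ∃ C C' : Finset V, IsMaxCliqueOf G C ∧ IsMaxCliqueOf G C' ∧ C ≠ C' ∧
    (C ∩ C').card = k}

/-- `G` restricted to the vertex set `s` is a threshold graph: it can be built from a
one-vertex graph by repeatedly adding either an isolated vertex or a vertex adjacent to
all existing vertices. -/
inductive IsThresholdOn {V : Type*} [DecidableEq V] (G : SimpleGraph V) : Finset V → Prop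
  | single (v : V) : IsThresholdOn G {v}
  | isolated (s : Finset V) (v : V) (hv : v ∉ s) (hs : IsThresholdOn G s)
      (hiso : ∀ u ∈ s, ¬ G.Adj v u) : IsThresholdOn G (insert v s)
  | dominating (s : Finset V) (v : V) (hv : v ∉ s) (hs : IsThresholdOn G s)
      (hdom : ∀ u ∈ s, G.Adj v u) : IsThresholdOn G (insert v s)

/-- `G` is a threshold graph. -/
def IsThreshold {V : Type*} [Fintype V] [DecidableEq V] (G : SimpleGraph V) : Prop :=
  IsThresholdOn G Finset.univ

/-- `|C_i(G)|`: the number of maximal cliques of `G` with exactly `i` vertices. -/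
noncomputable def maxCliqueCount {V : Type*} [Fintype V] (G : SimpleGraph V) (i : ℕ) : ℕ :=
  {s : Finset V | IsMaxCliqueOf G s ∧ s.card = i}.ncard

/-- `s` is a maximal clique of `G` among the cliques contained in `W`, i.e. a facet of the
restriction of the clique complex of `G` to `W`. -/
def IsMaxCliqueWithin {V : Type*} (G : SimpleGraph V) (W : Finset V) (s : Finset V) : Prop :=
  s ⊆ W ∧ G.IsClique (↑s : Set V) ∧
    ∀ t : Finset V, t ⊆ W → G.IsClique (↑t : Set V) → s ⊆ t → s = t

/-- The restriction of the clique complex of `G` to `W` is pure: all its facets have the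
same cardinality. -/
def PureOn {V : Type*} (G : SimpleGraph V) (W : Finset V) : Prop :=
  ∀ s t : Finset V, IsMaxCliqueWithin G W s → IsMaxCliqueWithin G W t → s.card = t.card


namespace StmtAux

variable {V : Type} {G : SimpleGraph V}

open SimpleGraph Walk

/-- take of a walk by index -/
def takeW : {u v : V} → (p : G.Walk u v) → (n : ℕ) → G.Walk u (p.getVert n)
  | _, _, Walk.nil, _ => Walk.nil
  | _, _, Walk.cons _ q, 0 => Walk.nil
  | _, _, Walk.cons h q, (n+1) => Walk.cons h (takeW q n)

lemma takeW_length : ∀ {u v : V} (p : G.Walk u v) (n : ℕ), n ≤ p.length →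
    (takeW p n).length = n
  | _, _, Walk.nil, n, hn => by
      simp only [Walk.length_nil, Nat.le_zero] at hn; subst hn; rfl
  | _, _, Walk.cons _ q, 0, _ => rfl
  | _, _, Walk.cons h q, (n+1), hn => by
      simpa [takeW] using takeW_length q n (by simpa [Walk.length_cons] using hn)

lemma dropW_spec : ∀ {u v : V} (p : G.Walk u v) (n : ℕ), n ≤ p.length →
    (p.drop n).length = p.length - n
  | _, _, Walk.nil, n, hn => by
      simp only [Walk.length_nil, Nat.le_zero] at hn; subst hn; rfl
  | _, _, Walk.cons h q, 0, _ => by simp [Walk.drop]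
  | _, _, Walk.cons h q, (n+1), hn => by
      simpa [Walk.drop] using dropW_spec q n (by simpa [Walk.length_cons] using hn)

lemma getVert_mem_support' : ∀ {u v : V} (p : G.Walk u v) (n : ℕ), p.getVert n ∈ p.support
  | _, _, Walk.nil, _ => by simp [Walk.getVert]
  | _, _, Walk.cons h q, 0 => by simp [Walk.getVert]
  | _, _, Walk.cons h q, (n+1) => by
      simp only [Walk.getVert, Walk.support_cons, List.mem_cons]
      exact Or.inr (getVert_mem_support' q n)

end StmtAux

namespace StmtAux
variable {V : Type} {G : SimpleGraph V}

/-- a minimal-length walk exists between reachable vertices -/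
lemma exists_min_walk {u v : V} (h : G.Reachable u v) :
    ∃ p : G.Walk u v, ∀ q : G.Walk u v, p.length ≤ q.length := by
  obtain ⟨q⟩ := h
  let s : Set ℕ := {n | ∃ p : G.Walk u v, p.length = n}
  have hs : s.Nonempty := ⟨q.length, q, rfl⟩
  obtain ⟨p, hp⟩ := Nat.sInf_mem hs
  exact ⟨p, fun r => hp ▸ Nat.sInf_le ⟨r, rfl⟩⟩

lemma min_walk_inj {u v : V} (p : G.Walk u v) (hmin : ∀ q : G.Walk u v, p.length ≤ q.length)
    {a b : ℕ} (ha : a < b) (hb : b ≤ p.length) (heq : p.getVert a = p.getVert b) : False := by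
  have hq : ∃ q : G.Walk u v, q.length = a + (p.length - b) := by
    refine ⟨(takeW p a).append ((p.drop b).copy heq.symm rfl), ?_⟩
    rw [SimpleGraph.Walk.length_append, takeW_length p a (le_trans (le_of_lt ha) hb),
      SimpleGraph.Walk.length_copy, dropW_spec p b hb]
  obtain ⟨q, hql⟩ := hq
  have := hmin q
  omega

lemma min_walk_no_chord {u v : V} (p : G.Walk u v)
    (hmin : ∀ q : G.Walk u v, p.length ≤ q.length)
    {a b : ℕ} (ha : a + 2 ≤ b) (hb : b ≤ p.length)
    (hadj : G.Adj (p.getVert a) (p.getVert b)) : False := by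
  have hq : ∃ q : G.Walk u v, q.length = a + 1 + (p.length - b) := by
    refine ⟨(takeW p a).append (SimpleGraph.Walk.cons hadj (p.drop b)), ?_⟩
    rw [SimpleGraph.Walk.length_append, takeW_length p a (by omega),
      SimpleGraph.Walk.length_cons, dropW_spec p b hb]
    omega
  obtain ⟨q, hql⟩ := hq
  have := hmin q
  omega

end StmtAux

namespace StmtAux
variable {V : Type} {G : SimpleGraph V}

/-- restriction of a graph to a vertex set, keeping the ambient vertex type -/
def restrict (G : SimpleGraph V) (W : Set V) : SimpleGraph V where
  Adj u v := G.Adj u v ∧ u ∈ W ∧ v ∈ W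
  symm := ⟨fun u v ⟨h, hu, hv⟩ => ⟨h.symm, hv, hu⟩⟩
  loopless := ⟨fun v ⟨h, _, _⟩ => G.loopless.irrefl v h⟩

lemma restrict_adj {W : Set V} {u v : V} :
    (restrict G W).Adj u v ↔ G.Adj u v ∧ u ∈ W ∧ v ∈ W := Iff.rfl

lemma restrict_mem_of_reachable {W : Set V} {u v : V}
    (h : (restrict G W).Reachable u v) (hu : u ∈ W) : v ∈ W := by
  obtain ⟨p⟩ := h
  induction p with
  | nil => exact hu
  | cons h q ih => exact ih h.2.2

lemma restrict_support_mem {W : Set V} {u v : V} (p : (restrict G W).Walk u v)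
    (hu : u ∈ W) : ∀ z ∈ p.support, z ∈ W := by
  induction p with
  | nil => intro z hz; simp at hz; exact hz ▸ hu
  | cons h q ih =>
    intro z hz
    rw [SimpleGraph.Walk.support_cons, List.mem_cons] at hz
    rcases hz with rfl | hz
    · exact hu
    · exact ih h.2.2 z hz

/-- transfer a walk in one restriction to another whose vertex set contains the support -/
lemma restrict_transfer {W Y : Set V} {u v : V} (p : (restrict G W).Walk u v)
    (h : ∀ z ∈ p.support, z ∈ Y) : Nonempty ((restrict G Y).Walk u v) := by
  induction p with
  | nil => exact ⟨SimpleGraph.Walk.nil⟩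
  | cons hadj q ih =>
    obtain ⟨q'⟩ := ih (fun z hz => h z (by simp [SimpleGraph.Walk.support_cons, hz]))
    refine ⟨SimpleGraph.Walk.cons ⟨hadj.1, ?_, ?_⟩ q'⟩
    · exact h _ (by simp)
    · exact h _ (by simp [SimpleGraph.Walk.support_cons,
        SimpleGraph.Walk.start_mem_support])

/-- a vertex in the support is reachable from the start -/
lemma reachable_of_mem_support {H : SimpleGraph V} {u v z : V} (p : H.Walk u v)
    (hz : z ∈ p.support) : H.Reachable u z := by
  induction p with
  | nil => simp at hz; exact hz ▸ SimpleGraph.Reachable.refl _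
  | cons h q ih =>
    rw [SimpleGraph.Walk.support_cons, List.mem_cons] at hz
    rcases hz with rfl | hz
    · exact SimpleGraph.Reachable.refl _
    · exact (h.reachable).trans (ih hz)

/-- if `s` is on a walk from `x` (and `x ≠ s`), then `s` has a `G`-neighbour reachable
from `x` avoiding `s` -/
lemma exists_nbr_of_mem_support {X : Set V} {x w s : V} (p : (restrict G X).Walk x w)
    (hs : s ∈ p.support) (hxs : x ≠ s) :
    ∃ u, G.Adj s u ∧ (restrict G (X \ {s})).Reachable x u := by
  induction p with
  | nil => simp at hs; exact absurd hs.symm hxs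
  | @cons a c w h q ih =>
    by_cases hcs : c = s
    · exact ⟨a, hcs ▸ h.1.symm, SimpleGraph.Reachable.refl _⟩
    · have hs' : s ∈ q.support := by
        rw [SimpleGraph.Walk.support_cons, List.mem_cons] at hs
        rcases hs with rfl | hs
        · exact absurd rfl hxs
        · exact hs
      obtain ⟨u, hu1, hu2⟩ := ih hs' hcs
      have hadj' : (restrict G (X \ {s})).Adj a c :=
        restrict_adj.mpr ⟨h.1, ⟨h.2.1, by simp [hxs]⟩, ⟨h.2.2, by simp [hcs]⟩⟩
      exact ⟨u, hu1, hadj'.reachable.trans hu2⟩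

end StmtAux

namespace StmtAux
variable {V : Type} {G : SimpleGraph V}

lemma cycle_contradiction (hch : IsChordal G) {s t : V}
    (hst : ¬ G.Adj s t)
    {nA nB : ℕ} (fA fB : ℕ → V)
    (hnA : 2 ≤ nA) (hnB : 2 ≤ nB)
    (hA0 : fA 0 = s) (hAn : fA nA = t) (hB0 : fB 0 = s) (hBn : fB nB = t)
    (hadjA : ∀ k, k < nA → G.Adj (fA k) (fA (k+1)))
    (hadjB : ∀ k, k < nB → G.Adj (fB k) (fB (k+1)))
    (hchordA : ∀ a b, a + 2 ≤ b → b ≤ nA → ¬ G.Adj (fA a) (fA b))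
    (hchordB : ∀ a b, a + 2 ≤ b → b ≤ nB → ¬ G.Adj (fB a) (fB b))
    (hinjA : ∀ a b, a ≤ nA → b ≤ nA → fA a = fA b → a = b)
    (hinjB : ∀ a b, a ≤ nB → b ≤ nB → fB a = fB b → a = b)
    (hcross : ∀ a b, 1 ≤ a → a ≤ nA - 1 → 1 ≤ b → b ≤ nB - 1 →
      ¬ G.Adj (fA a) (fB b) ∧ fA a ≠ fB b) : False := by
  set n := nA + nB with hn_def
  have hn : 4 ≤ n := by omega
  haveI : NeZero n := ⟨by omega⟩
  haveI : Fact (1 < n) := ⟨by omega⟩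
  set g : ℕ → V := fun a => if a ≤ nA then fA a else fB (n - a) with hg_def
  -- mixed distinctness
  have mixed : ∀ a b : ℕ, a ≤ nA → nA < b → b < n → g a = g b → False := by
    intro a b haA hbA hbn heq
    have hga : g a = fA a := by simp only [hg_def]; exact if_pos haA
    have hgb : g b = fB (n - b) := by simp only [hg_def]; exact if_neg (by omega)
    have hβ1 : 1 ≤ n - b := by omega
    have hβ2 : n - b ≤ nB - 1 := by omega
    rcases Nat.eq_zero_or_pos a with rfl | hapos
    · -- a = 0 : s = fB (n - b)
      have : fB 0 = fB (n - b) := by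
        rw [hB0, ← hA0]; rw [hga, hgb] at heq; exact heq
      have := hinjB 0 (n - b) (by omega) (by omega) this
      omega
    · rcases Nat.lt_or_ge a nA with halt | hage
      · exact (hcross a (n - b) hapos (by omega) hβ1 hβ2).2 (by rw [← hga, ← hgb, heq])
      · have haa : a = nA := by omega
        subst haa
        have : fB nB = fB (n - b) := by
          rw [hBn, ← hAn]; rw [hga, hgb] at heq; exact heq
        have := hinjB nB (n - b) (by omega) (by omega) this
        omega
  have ginj : ∀ a b : ℕ, a < n → b < n → g a = g b → a = b := by
    intro a b han hbn heq
    rcases le_or_gt a nA with haA | haA <;> rcases le_or_gt b nA with hbA | hbA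
    · exact hinjA a b haA hbA (by simp only [hg_def] at heq; rwa [if_pos haA, if_pos hbA] at heq)
    · exact absurd (mixed a b haA hbA hbn heq) id
    · exact absurd (mixed b a hbA haA han heq.symm) id
    · have : fB (n - a) = fB (n - b) := by
        simp only [hg_def] at heq
        rwa [if_neg (by omega : ¬ a ≤ nA), if_neg (by omega : ¬ b ≤ nA)] at heq
      have := hinjB (n - a) (n - b) (by omega) (by omega) this
      omega
  set f : ZMod n → V := fun i => g i.val with hf_def
  have hval_succ : ∀ i : ZMod n, (i + 1).val = (i.val + 1) % n := by
    intro i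
    rw [ZMod.val_add, ZMod.val_one]
  have hinj : Function.Injective f := by
    intro i j hij
    exact ZMod.val_injective n (ginj i.val j.val i.val_lt j.val_lt hij)
  have hadjf : ∀ i : ZMod n, G.Adj (f i) (f (i + 1)) := by
    intro i
    have hv := hval_succ i
    have hvi : i.val < n := i.val_lt
    show G.Adj (g i.val) (g (i + 1).val)
    rcases Nat.lt_or_ge i.val nA with h1 | h1
    · have : (i + 1).val = i.val + 1 := by rw [hv, Nat.mod_eq_of_lt (by omega)]
      rw [this]
      simp only [hg_def]
      rw [if_pos (le_of_lt h1), if_pos (by omega : i.val + 1 ≤ nA)]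
      exact hadjA i.val h1
    · rcases Nat.eq_or_lt_of_le h1 with h2 | h2
      · -- i.val = nA
        have hiv : i.val = nA := h2.symm
        have : (i + 1).val = nA + 1 := by rw [hv, hiv, Nat.mod_eq_of_lt (by omega)]
        rw [this, hiv]
        simp only [hg_def]
        rw [if_pos (le_refl nA), if_neg (by omega : ¬ nA + 1 ≤ nA)]
        have : n - (nA + 1) = nB - 1 := by omega
        rw [this, hAn, ← hBn]
        have hB' := hadjB (nB - 1) (by omega)
        rw [show nB - 1 + 1 = nB by omega] at hB'
        exact hB'.symm
      · rcases Nat.lt_or_ge i.val (n - 1) with h3 | h3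
        · have : (i + 1).val = i.val + 1 := by rw [hv, Nat.mod_eq_of_lt (by omega)]
          rw [this]
          simp only [hg_def]
          rw [if_neg (by omega : ¬ i.val ≤ nA), if_neg (by omega : ¬ i.val + 1 ≤ nA)]
          have he : n - i.val = (n - (i.val + 1)) + 1 := by omega
          rw [he]
          exact (hadjB (n - (i.val + 1)) (by omega)).symm
        · have hiv : i.val = n - 1 := by omega
          have : (i + 1).val = 0 := by rw [hv, hiv]; simp [Nat.sub_add_cancel (by omega : 1 ≤ n)]
          rw [this]
          simp only [hg_def]
          rw [if_neg (by omega : ¬ i.val ≤ nA), if_pos (by omega : 0 ≤ nA)]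
          have : n - i.val = 1 := by omega
          rw [hiv] at this ⊢
          rw [this, hA0, ← hB0]
          exact (hadjB 0 (by omega)).symm
  obtain ⟨i, j, hij, hij1, hji1, hadj⟩ := hch n hn f hinj hadjf
  -- translate to natural number indices
  have hab : i.val ≠ j.val := fun h => hij (ZMod.val_injective n h)
  have hab1 : (i.val + 1) % n ≠ j.val := by
    intro h
    exact hij1 (ZMod.val_injective n (by rw [hval_succ i]; exact h))
  have hba1 : (j.val + 1) % n ≠ i.val := by
    intro h
    exact hji1 (ZMod.val_injective n (by rw [hval_succ j]; exact h))
  have han : i.val < n := i.val_lt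
  have hbn : j.val < n := j.val_lt
  have hadj' : G.Adj (g i.val) (g j.val) := hadj
  -- chord within A side (ordered)
  have coreA : ∀ a b : ℕ, a ≤ nA → b ≤ nA → a < b → (a + 1) % n ≠ b →
      G.Adj (g a) (g b) → False := by
    intro a b haA hbA hab hmod hadj
    simp only [hg_def] at hadj
    rw [if_pos haA, if_pos hbA] at hadj
    rcases Nat.eq_or_lt_of_le hab with h1 | h1
    · exact hmod (by rw [Nat.mod_eq_of_lt (by omega)]; omega)
    · exact hchordA a b (by omega) hbA hadj
  have coreB : ∀ a b : ℕ, nA < a → nA < b → a < n → b < n → a < b → (a + 1) % n ≠ b →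
      G.Adj (g a) (g b) → False := by
    intro a b haA hbA han hbn hab hmod hadj
    simp only [hg_def] at hadj
    rw [if_neg (by omega : ¬ a ≤ nA), if_neg (by omega : ¬ b ≤ nA)] at hadj
    rcases Nat.eq_or_lt_of_le hab with h1 | h1
    · exact hmod (by rw [Nat.mod_eq_of_lt (by omega)]; omega)
    · exact hchordB (n - b) (n - a) (by omega) (by omega) hadj.symm
  have coreM : ∀ a b : ℕ, a ≤ nA → nA < b → b < n → (a + 1) % n ≠ b → (b + 1) % n ≠ a →
      G.Adj (g a) (g b) → False := by
    intro a b haA hbA hbn hmod1 hmod2 hadj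
    simp only [hg_def] at hadj
    rw [if_pos haA, if_neg (by omega : ¬ b ≤ nA)] at hadj
    have hβ1 : 1 ≤ n - b := by omega
    have hβ2 : n - b ≤ nB - 1 := by omega
    rcases Nat.eq_zero_or_pos a with rfl | hapos
    · -- a = 0 : chord from s into B-path
      rw [hA0, ← hB0] at hadj
      have hβ : 2 ≤ n - b := by
        rcases Nat.eq_or_lt_of_le hβ1 with h | h
        · exfalso
          apply hmod2
          have : b = n - 1 := by omega
          rw [this, Nat.sub_add_cancel (by omega : 1 ≤ n)]
          simp
        · omega
      exact hchordB 0 (n - b) (by omega) (by omega) hadj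
    · rcases Nat.lt_or_ge a nA with halt | hage
      · exact (hcross a (n - b) hapos (by omega) hβ1 hβ2).1 hadj
      · have haa : a = nA := by omega
        rw [haa, hAn, ← hBn] at hadj
        have hβ : n - b ≤ nB - 2 := by
          rcases Nat.eq_or_lt_of_le hβ2 with h | h
          · exfalso
            apply hmod1
            have hb' : b = nA + 1 := by omega
            rw [Nat.mod_eq_of_lt (by omega)]
            omega
          · omega
        exact hchordB (n - b) nB (by omega) (by omega) hadj.symm
  rcases le_or_gt i.val nA with hiA | hiA <;> rcases le_or_gt j.val nA with hjA | hjA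
  · rcases Nat.lt_or_ge i.val j.val with h | h
    · exact coreA i.val j.val hiA hjA h hab1 hadj'
    · exact coreA j.val i.val hjA hiA (by omega) hba1 hadj'.symm
  · exact coreM i.val j.val hiA hjA hbn hab1 hba1 hadj'
  · exact coreM j.val i.val hjA hiA han hba1 hab1 hadj'.symm
  · rcases Nat.lt_or_ge i.val j.val with h | h
    · exact coreB i.val j.val hiA hjA han hbn h hab1 hadj'
    · exact coreB j.val i.val hjA hiA hbn han (by omega) hba1 hadj'.symm

end StmtAux

namespace StmtAux
variable {V : Type} [DecidableEq V] {G : SimpleGraph V}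

/-- `v` is simplicial within `W` -/
def simpW (G : SimpleGraph V) (W : Finset V) (v : V) : Prop :=
  v ∈ W ∧ ∀ u₁ ∈ W, ∀ u₂ ∈ W, G.Adj v u₁ → G.Adj v u₂ → u₁ ≠ u₂ → G.Adj u₁ u₂

/-- the dirac disjunction statement for a finset -/
def diracP (G : SimpleGraph V) (W : Finset V) : Prop :=
  (∀ a ∈ W, ∀ b ∈ W, a ≠ b → G.Adj a b) ∨
    (∃ a ∈ W, ∃ b ∈ W, a ≠ b ∧ ¬ G.Adj a b ∧ simpW G W a ∧ simpW G W b)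

lemma side_simplicial (W : Finset V)
    (ih : ∀ T, T ⊂ W → diracP G T)
    (S : Finset V) (hSW : S ⊆ W) (x y : V) (hxW : x ∈ W) (hyW : y ∈ W)
    (hxS : x ∉ S) (hyS : y ∉ S)
    (hsep : ¬ (restrict G ((↑W : Set V) \ ↑S)).Reachable x y)
    (hSclique : ∀ s ∈ S, ∀ t ∈ S, s ≠ t → G.Adj s t) :
    ∃ a, (restrict G ((↑W : Set V) \ ↑S)).Reachable x a ∧ simpW G W a := by
  classical
  set X : Set V := (↑W : Set V) \ ↑S with hX_def
  set H : SimpleGraph V := restrict G X with hH_def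
  have hxX : x ∈ X := ⟨by simpa using hxW, by simpa using hxS⟩
  set A : Set V := {u | H.Reachable x u} with hA_def
  have hAX : ∀ u ∈ A, u ∈ X := fun u hu => restrict_mem_of_reachable hu hxX
  set A_fs : Finset V := W.filter (fun u => u ∈ A) with hAfs_def
  set W_A : Finset V := A_fs ∪ S with hWA_def
  have hWA_sub : W_A ⊆ W := by
    intro u hu
    rcases Finset.mem_union.mp hu with h | h
    · exact (Finset.mem_filter.mp h).1
    · exact hSW h
  have hyA : y ∉ A := fun h => hsep h
  have hyWA : y ∉ W_A := by
    intro h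
    rcases Finset.mem_union.mp h with h | h
    · exact hyA (Finset.mem_filter.mp h).2
    · exact hyS h
  have hss : W_A ⊂ W := ⟨hWA_sub, fun h => hyWA (h hyW)⟩
  have hmemA : ∀ u ∈ A, u ∈ W_A := by
    intro u hu
    exact Finset.mem_union.mpr (Or.inl (Finset.mem_filter.mpr ⟨(hAX u hu).1, hu⟩))
  -- neighbours (within W) of a vertex of A lie in W_A
  have hnbr_closed : ∀ a ∈ A, ∀ u ∈ W, G.Adj a u → u ∈ W_A := by
    intro a ha u huW hadj
    by_cases huS : u ∈ S
    · exact Finset.mem_union.mpr (Or.inr huS)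
    · have : H.Adj a u := ⟨hadj, hAX a ha, ⟨by simpa using huW, by simpa using huS⟩⟩
      exact hmemA u (ha.trans this.reachable)
  have hlift : ∀ a ∈ A, simpW G W_A a → simpW G W a := by
    intro a ha ⟨haWA, hcl⟩
    refine ⟨hWA_sub haWA, fun u₁ h₁ u₂ h₂ had₁ had₂ hne => ?_⟩
    exact hcl u₁ (hnbr_closed a ha u₁ h₁ had₁) u₂ (hnbr_closed a ha u₂ h₂ had₂) had₁ had₂ hne
  rcases ih W_A hss with hcomp | ⟨a, haW, b, hbW, hneq, hnadjab, hsa, hsb⟩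
  · refine ⟨x, SimpleGraph.Reachable.refl x, hlift x (SimpleGraph.Reachable.refl x) ?_⟩
    exact ⟨hmemA x (SimpleGraph.Reachable.refl x),
      fun u₁ h₁ u₂ h₂ _ _ hne => hcomp u₁ h₁ u₂ h₂ hne⟩
  · rcases Finset.mem_union.mp haW with haA | haS
    · have haA' : a ∈ A := (Finset.mem_filter.mp haA).2
      exact ⟨a, haA', hlift a haA' hsa⟩
    · rcases Finset.mem_union.mp hbW with hbA | hbS
      · have hbA' : b ∈ A := (Finset.mem_filter.mp hbA).2
        exact ⟨b, hbA', hlift b hbA' hsb⟩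
      · exact absurd (hSclique a haS b hbS hneq) hnadjab

end StmtAux

namespace StmtAux
variable {V : Type} [DecidableEq V] {G : SimpleGraph V}

lemma dirac (hch : IsChordal G) : ∀ W : Finset V, diracP G W := by
  intro W
  induction W using Finset.strongInduction with
  | _ W ih =>
  classical
  by_cases hcomp : ∀ a ∈ W, ∀ b ∈ W, a ≠ b → G.Adj a b
  · exact Or.inl hcomp
  · right
    push_neg at hcomp
    obtain ⟨x, hxW, y, hyW, hxy, hnadj⟩ := hcomp
    -- separators
    set Sep : Finset V → Prop := fun T => T ⊆ W ∧ x ∉ T ∧ y ∉ T ∧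
      ¬ (restrict G ((↑W : Set V) \ ↑T)).Reachable x y with hSep_def
    have hT₀ : Sep ((W.erase x).erase y) := by
      refine ⟨(Finset.erase_subset _ _).trans (Finset.erase_subset _ _), ?_, ?_, ?_⟩
      · intro h
        exact (Finset.mem_erase.mp (Finset.mem_of_mem_erase h)).1 rfl
      · intro h
        exact (Finset.mem_erase.mp h).1 rfl
      · intro ⟨p⟩
        cases p with
        | nil => exact hxy rfl
        | @cons _ z _ h q =>
          have hzX := h.2.2
          have hzW : z ∈ W := Finset.mem_coe.mp hzX.1
          have hzT : z ∉ (W.erase x).erase y := fun hh => hzX.2 (Finset.mem_coe.mpr hh)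
          have hzx : z ≠ x := fun hzx => G.loopless.irrefl x (hzx ▸ h.1)
          have hzy : z ≠ y := fun hzy => hnadj (hzy ▸ h.1)
          exact hzT (Finset.mem_erase.mpr ⟨hzy, Finset.mem_erase.mpr ⟨hzx, hzW⟩⟩)
    -- choose a minimum-cardinality separator
    obtain ⟨S, hSmem, hSmin⟩ := Finset.exists_min_image
      ((W.powerset).filter Sep) Finset.card
      ⟨(W.erase x).erase y, Finset.mem_filter.mpr ⟨Finset.mem_powerset.mpr hT₀.1, hT₀⟩⟩
    have hS : Sep S := (Finset.mem_filter.mp hSmem).2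
    obtain ⟨hSW, hxS, hyS, hsep⟩ := hS
    set X : Set V := (↑W : Set V) \ ↑S with hX_def
    set H : SimpleGraph V := restrict G X with hH_def
    have hxX : x ∈ X := ⟨by simpa using hxW, by simpa using hxS⟩
    have hyX : y ∈ X := ⟨by simpa using hyW, by simpa using hyS⟩
    set A : Set V := {u | H.Reachable x u} with hA_def
    set B : Set V := {u | H.Reachable y u} with hB_def
    have hAX : ∀ u ∈ A, u ∈ X := fun u hu => restrict_mem_of_reachable hu hxX
    have hBX : ∀ u ∈ B, u ∈ X := fun u hu => restrict_mem_of_reachable hu hyX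
    have hAB : ∀ u ∈ A, ∀ w ∈ B, u ≠ w ∧ ¬ G.Adj u w := by
      intro u hu w hw
      constructor
      · rintro rfl
        exact hsep (hu.trans hw.symm)
      · intro hadj
        have : H.Adj u w := ⟨hadj, hAX u hu, hBX w hw⟩
        exact hsep ((hu.trans this.reachable).trans hw.symm)
    -- every separator vertex has a neighbour in each side
    have herase : ∀ s ∈ S, ¬ Sep (S.erase s) := by
      intro s hs hSep'
      have hmem : S.erase s ∈ (W.powerset).filter Sep :=
        Finset.mem_filter.mpr ⟨Finset.mem_powerset.mpr hSep'.1, hSep'⟩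
      have := hSmin _ hmem
      have hcard := Finset.card_erase_of_mem hs
      have : S.card ≤ S.card - 1 := hcard ▸ this
      have hpos : 0 < S.card := Finset.card_pos.mpr ⟨s, hs⟩
      omega
    have hXer : ∀ s ∈ S, ((↑W : Set V) \ ↑(S.erase s)) \ {s} = X := by
      intro s hs
      ext z
      constructor
      · rintro ⟨⟨hzW, hz⟩, hzs⟩
        refine ⟨hzW, fun hzS => hz ?_⟩
        exact Finset.mem_coe.mpr (Finset.mem_erase.mpr ⟨fun h => hzs h, Finset.mem_coe.mp hzS⟩)
      · rintro ⟨hzW, hzS⟩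
        refine ⟨⟨hzW, fun h => hzS ?_⟩, fun h => hzS ?_⟩
        · exact Finset.mem_coe.mpr (Finset.mem_of_mem_erase (Finset.mem_coe.mp h))
        · exact Finset.mem_coe.mpr ((show z = s from h) ▸ hs)
    -- neighbours of separator vertices in each component
    have hnbr : ∀ (z : V), z ∈ X → (∀ s ∈ S, ∃ p : (restrict G ((↑W : Set V) \ ↑(S.erase s))).Walk z s → False, True) → True := fun _ _ _ => trivial
    clear hnbr
    have hnbrA : ∀ s ∈ S, ∃ a ∈ A, G.Adj s a := by
      intro s hs
      by_contra hno
      push_neg at hno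
      apply herase s hs
      refine ⟨(Finset.erase_subset _ _).trans hSW, fun h => hxS (Finset.mem_of_mem_erase h),
        fun h => hyS (Finset.mem_of_mem_erase h), ?_⟩
      rintro ⟨p⟩
      by_cases hsp : s ∈ p.support
      · obtain ⟨u, hu1, hu2⟩ := exists_nbr_of_mem_support p hsp
          (fun h => hxS (h ▸ hs))
        rw [hXer s hs] at hu2
        exact hno u hu2 hu1
      · have htrans : ∀ z ∈ p.support, z ∈ X := by
          intro z hz
          have hzX := restrict_support_mem p
            ⟨by simpa using hxW, fun h => hxS (Finset.mem_of_mem_erase (Finset.mem_coe.mp h))⟩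
            z hz
          refine ⟨hzX.1, fun hzS => ?_⟩
          have hzs : z ≠ s := fun h => hsp (h ▸ hz)
          exact hzX.2 (Finset.mem_coe.mpr (Finset.mem_erase.mpr ⟨hzs, Finset.mem_coe.mp hzS⟩))
        obtain ⟨q⟩ := restrict_transfer p htrans
        exact hsep ⟨q⟩
    have hnbrB : ∀ s ∈ S, ∃ b ∈ B, G.Adj s b := by
      intro s hs
      by_contra hno
      push_neg at hno
      apply herase s hs
      refine ⟨(Finset.erase_subset _ _).trans hSW, fun h => hxS (Finset.mem_of_mem_erase h),
        fun h => hyS (Finset.mem_of_mem_erase h), ?_⟩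
      rintro ⟨p⟩
      replace p := p.reverse
      by_cases hsp : s ∈ p.support
      · obtain ⟨u, hu1, hu2⟩ := exists_nbr_of_mem_support p hsp
          (fun h => hyS (h ▸ hs))
        rw [hXer s hs] at hu2
        exact hno u hu2 hu1
      · have htrans : ∀ z ∈ p.support, z ∈ X := by
          intro z hz
          have hzX := restrict_support_mem p
            ⟨by simpa using hyW, fun h => hyS (Finset.mem_of_mem_erase (Finset.mem_coe.mp h))⟩
            z hz
          refine ⟨hzX.1, fun hzS => ?_⟩
          have hzs : z ≠ s := fun h => hsp (h ▸ hz)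
          exact hzX.2 (Finset.mem_coe.mpr (Finset.mem_erase.mpr ⟨hzs, Finset.mem_coe.mp hzS⟩))
        obtain ⟨q⟩ := restrict_transfer p htrans
        exact hsep ⟨q.reverse⟩
    -- the separator is a clique
    have hSclique : ∀ s ∈ S, ∀ t ∈ S, s ≠ t → G.Adj s t := by
      intro s hs t ht hstne
      by_contra hnadj'
      obtain ⟨a₀, ha₀A, ha₀adj⟩ := hnbrA s hs
      obtain ⟨a₁, ha₁A, ha₁adj⟩ := hnbrA t ht
      obtain ⟨b₀, hb₀B, hb₀adj⟩ := hnbrB s hs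
      obtain ⟨b₁, hb₁B, hb₁adj⟩ := hnbrB t ht
      set UA : Set V := A ∪ {s, t} with hUA_def
      set HA := restrict G UA with hHA_def
      set UB : Set V := B ∪ {s, t} with hUB_def
      set HB := restrict G UB with hHB_def
      have hsUA : s ∈ UA := Or.inr (Or.inl rfl)
      have htUA : t ∈ UA := Or.inr (Or.inr rfl)
      have hsUB : s ∈ UB := Or.inr (Or.inl rfl)
      have htUB : t ∈ UB := Or.inr (Or.inr rfl)
      have hreachA : HA.Reachable s t := by
        obtain ⟨p⟩ := (ha₀A : H.Reachable x a₀).symm.trans ha₁A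
        have hsup : ∀ z ∈ p.support, z ∈ UA := fun z hz =>
          Or.inl (ha₀A.trans (reachable_of_mem_support p hz))
        obtain ⟨q⟩ := restrict_transfer p hsup
        exact ((SimpleGraph.Adj.reachable (⟨ha₀adj, hsUA, Or.inl ha₀A⟩ : HA.Adj s a₀)).trans
          ⟨q⟩).trans (SimpleGraph.Adj.reachable (⟨ha₁adj.symm, Or.inl ha₁A, htUA⟩ : HA.Adj a₁ t))
      have hreachB : HB.Reachable s t := by
        obtain ⟨p⟩ := (hb₀B : H.Reachable y b₀).symm.trans hb₁B
        have hsup : ∀ z ∈ p.support, z ∈ UB := fun z hz =>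
          Or.inl (hb₀B.trans (reachable_of_mem_support p hz))
        obtain ⟨q⟩ := restrict_transfer p hsup
        exact ((SimpleGraph.Adj.reachable (⟨hb₀adj, hsUB, Or.inl hb₀B⟩ : HB.Adj s b₀)).trans
          ⟨q⟩).trans (SimpleGraph.Adj.reachable (⟨hb₁adj.symm, Or.inl hb₁B, htUB⟩ : HB.Adj b₁ t))
      obtain ⟨pA, hpAmin⟩ := exists_min_walk hreachA
      obtain ⟨pB, hpBmin⟩ := exists_min_walk hreachB
      have hsupA : ∀ z ∈ pA.support, z ∈ UA := restrict_support_mem pA hsUA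
      have hsupB : ∀ z ∈ pB.support, z ∈ UB := restrict_support_mem pB hsUB
      have hnA1 : pA.length ≠ 0 := fun h => hstne (SimpleGraph.Walk.eq_of_length_eq_zero h)
      have hnB1 : pB.length ≠ 0 := fun h => hstne (SimpleGraph.Walk.eq_of_length_eq_zero h)
      have hnA2 : pA.length ≠ 1 := by
        intro h
        have h1 := pA.adj_getVert_succ (show 0 < pA.length by omega)
        rw [SimpleGraph.Walk.getVert_zero] at h1
        have h2 : pA.getVert (0 + 1) = t := by
          rw [show (0 + 1 : ℕ) = pA.length by omega]; exact pA.getVert_length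
        exact hnadj' (h2 ▸ h1.1)
      have hnB2 : pB.length ≠ 1 := by
        intro h
        have h1 := pB.adj_getVert_succ (show 0 < pB.length by omega)
        rw [SimpleGraph.Walk.getVert_zero] at h1
        have h2 : pB.getVert (0 + 1) = t := by
          rw [show (0 + 1 : ℕ) = pB.length by omega]; exact pB.getVert_length
        exact hnadj' (h2 ▸ h1.1)
      have hinjA : ∀ a b, a ≤ pA.length → b ≤ pA.length → pA.getVert a = pA.getVert b → a = b := by
        intro a b ha hb heq
        rcases lt_trichotomy a b with h | h | h
        · exact absurd (min_walk_inj pA hpAmin h hb heq) id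
        · exact h
        · exact absurd (min_walk_inj pA hpAmin h ha heq.symm) id
      have hinjB : ∀ a b, a ≤ pB.length → b ≤ pB.length → pB.getVert a = pB.getVert b → a = b := by
        intro a b ha hb heq
        rcases lt_trichotomy a b with h | h | h
        · exact absurd (min_walk_inj pB hpBmin h hb heq) id
        · exact h
        · exact absurd (min_walk_inj pB hpBmin h ha heq.symm) id
      have hchordA : ∀ a b, a + 2 ≤ b → b ≤ pA.length →
          ¬ G.Adj (pA.getVert a) (pA.getVert b) := by
        intro a b h1 h2 hadj
        exact min_walk_no_chord pA hpAmin h1 h2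
          ⟨hadj, hsupA _ (getVert_mem_support' pA a), hsupA _ (getVert_mem_support' pA b)⟩
      have hchordB : ∀ a b, a + 2 ≤ b → b ≤ pB.length →
          ¬ G.Adj (pB.getVert a) (pB.getVert b) := by
        intro a b h1 h2 hadj
        exact min_walk_no_chord pB hpBmin h1 h2
          ⟨hadj, hsupB _ (getVert_mem_support' pB a), hsupB _ (getVert_mem_support' pB b)⟩
      have hintA : ∀ a, 1 ≤ a → a ≤ pA.length - 1 → pA.getVert a ∈ A := by
        intro a h1 h2
        rcases hsupA _ (getVert_mem_support' pA a) with h | h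
        · exact h
        · exfalso
          rcases h with h | h
          · exact min_walk_inj pA hpAmin (show (0:ℕ) < a by omega) (by omega)
              (by rw [SimpleGraph.Walk.getVert_zero]; exact h.symm)
          · exact min_walk_inj pA hpAmin (show a < pA.length by omega) le_rfl
              (by rw [SimpleGraph.Walk.getVert_length]; exact h)
      have hintB : ∀ a, 1 ≤ a → a ≤ pB.length - 1 → pB.getVert a ∈ B := by
        intro a h1 h2
        rcases hsupB _ (getVert_mem_support' pB a) with h | h
        · exact h
        · exfalso
          rcases h with h | h
          · exact min_walk_inj pB hpBmin (show (0:ℕ) < a by omega) (by omega)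
              (by rw [SimpleGraph.Walk.getVert_zero]; exact h.symm)
          · exact min_walk_inj pB hpBmin (show a < pB.length by omega) le_rfl
              (by rw [SimpleGraph.Walk.getVert_length]; exact h)
      exact cycle_contradiction hch hnadj' (fun k => pA.getVert k) (fun k => pB.getVert k)
        (by omega) (by omega) pA.getVert_zero pA.getVert_length pB.getVert_zero pB.getVert_length
        (fun k hk => (pA.adj_getVert_succ hk).1)
        (fun k hk => (pB.adj_getVert_succ hk).1)
        hchordA hchordB hinjA hinjB
        (fun a b h1 h2 h3 h4 => by
          have hAB' := hAB _ (hintA a h1 h2) _ (hintB b h3 h4)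
          exact ⟨hAB'.2, hAB'.1⟩)
    have hsideA := side_simplicial W ih S hSW x y hxW hyW hxS hyS hsep hSclique
    have hsideB := side_simplicial W ih S hSW y x hyW hxW hyS hxS
      (fun h => hsep h.symm) hSclique
    obtain ⟨a, haA, hsa⟩ := hsideA
    obtain ⟨b, hbB, hsb⟩ := hsideB
    have hab := hAB a haA b hbB
    exact ⟨a, hsa.1, b, hsb.1, hab.1, hab.2, hsa, hsb⟩

end StmtAux

namespace StmtAux
variable {V : Type} [DecidableEq V] {G : SimpleGraph V}

lemma exists_simplicial (hch : IsChordal G) (W : Finset V) (hW : W.Nonempty) :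
    ∃ v, simpW G W v := by
  rcases dirac hch W with h | ⟨a, _, _, _, _, _, hsa, _⟩
  · obtain ⟨v, hv⟩ := hW
    exact ⟨v, hv, fun u₁ h₁ u₂ h₂ _ _ hne => h u₁ h₁ u₂ h₂ hne⟩
  · exact ⟨a, hsa⟩

lemma sum_powerset_pow (N : Finset V) (x : ℤ) :
    ∑ T ∈ N.powerset, x ^ T.card = (x + 1) ^ N.card := by
  have h := Finset.prod_add (fun _ : V => x) (fun _ : V => (1 : ℤ)) N
  simp only [Finset.prod_const, Finset.prod_const_one, one_pow, mul_one] at h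
  rw [← h]

lemma exists_max_clique_within (W N : Finset V) (hNW : N ⊆ W) (hN : G.IsClique (↑N : Set V)) :
    ∃ C, IsMaxCliqueWithin G W C ∧ N ⊆ C := by
  classical
  obtain ⟨C, hCmem, hCmax⟩ := Finset.exists_max_image
    (W.powerset.filter (fun s : Finset V => G.IsClique (↑s : Set V) ∧ N ⊆ s)) Finset.card
    ⟨N, Finset.mem_filter.mpr ⟨Finset.mem_powerset.mpr hNW, hN, Finset.Subset.refl N⟩⟩
  obtain ⟨hCW, hCcl, hNC⟩ := Finset.mem_filter.mp hCmem
  refine ⟨C, ⟨Finset.mem_powerset.mp hCW, hCcl, fun t htW htcl hCt => ?_⟩, hNC⟩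
  have htmem : t ∈ W.powerset.filter (fun s : Finset V => G.IsClique (↑s : Set V) ∧ N ⊆ s) :=
    Finset.mem_filter.mpr ⟨Finset.mem_powerset.mpr htW, htcl, hNC.trans hCt⟩
  exact Finset.eq_of_subset_of_card_le hCt (hCmax t htmem)

end StmtAux

namespace StmtAux
variable {V : Type} [DecidableEq V] {G : SimpleGraph V}

noncomputable def cliquesIn (G : SimpleGraph V) (W : Finset V) : Finset (Finset V) :=
  @Finset.filter _ (fun s => G.IsClique (↑s : Set V)) (Classical.decPred _) W.powerset

noncomputable def maxCliquesIn (G : SimpleGraph V) (W : Finset V) : Finset (Finset V) :=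
  @Finset.filter _ (fun s => IsMaxCliqueWithin G W s) (Classical.decPred _) W.powerset

lemma mem_cliquesIn {W s : Finset V} :
    s ∈ cliquesIn G W ↔ s ⊆ W ∧ G.IsClique (↑s : Set V) :=
  Iff.trans (@Finset.mem_filter _ _ (Classical.decPred _) _ _)
    (and_congr_left' Finset.mem_powerset)

lemma mem_maxCliquesIn {W s : Finset V} :
    s ∈ maxCliquesIn G W ↔ IsMaxCliqueWithin G W s :=
  Iff.trans (@Finset.mem_filter _ _ (Classical.decPred _) _ _)
    ⟨fun h => h.2, fun h => ⟨Finset.mem_powerset.mpr h.1, h⟩⟩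

lemma clique_identity (hch : IsChordal G) : ∀ W : Finset V,
    ∃ S : Multiset ℕ,
      (∀ k ∈ S, ∃ C C' : Finset V, IsMaxCliqueWithin G W C ∧ IsMaxCliqueWithin G W C' ∧
        C ≠ C' ∧ (C ∩ C').card = k) ∧
      ∀ x : ℤ,
        (∑ s ∈ cliquesIn G W, x ^ s.card) =
        (∑ C ∈ maxCliquesIn G W, (x+1) ^ C.card) - (S.map (fun k => (x+1) ^ k)).sum := by
  intro W
  induction W using Finset.strongInduction with
  | _ W ih =>
  classical
  rcases Finset.eq_empty_or_nonempty W with rfl | hWne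
  · refine ⟨0, by simp, fun x => ?_⟩
    have hcl : G.IsClique (↑(∅ : Finset V) : Set V) := by simp
    have hmax : IsMaxCliqueWithin G (∅ : Finset V) (∅ : Finset V) :=
      ⟨Finset.Subset.refl _, hcl, fun t ht _ _ => ((Finset.subset_empty.mp ht) ▸ rfl)⟩
    have h1 : cliquesIn G (∅ : Finset V) = {∅} := by
      ext s
      rw [mem_cliquesIn, Finset.mem_singleton]
      constructor
      · rintro ⟨hs, _⟩; exact Finset.subset_empty.mp hs
      · rintro rfl; exact ⟨Finset.Subset.refl _, hcl⟩
    have h2 : maxCliquesIn G (∅ : Finset V) = {∅} := by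
      ext s
      rw [mem_maxCliquesIn, Finset.mem_singleton]
      constructor
      · rintro ⟨hs, _⟩; exact Finset.subset_empty.mp hs
      · rintro rfl; exact hmax
    rw [h1, h2]
    simp
  obtain ⟨v, hvW, hsimp⟩ := exists_simplicial hch W hWne
  set W' := W.erase v with hW'_def
  set N := W'.filter (fun u => G.Adj v u) with hN_def
  have hNW' : N ⊆ W' := Finset.filter_subset _ _
  have hW'W : W' ⊆ W := Finset.erase_subset _ _
  have hvW' : v ∉ W' := Finset.notMem_erase v W
  have hvN : v ∉ N := fun h => hvW' (hNW' h)
  have hNadj : ∀ u ∈ N, G.Adj v u := fun u hu => (Finset.mem_filter.mp hu).2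
  have hNmem : ∀ u, u ∈ W → G.Adj v u → u ∈ N := fun u hu hadj =>
    Finset.mem_filter.mpr ⟨Finset.mem_erase.mpr ⟨fun h => G.loopless.irrefl v (h ▸ hadj), hu⟩, hadj⟩
  set K := insert v N with hK_def
  have hKW : K ⊆ W := Finset.insert_subset hvW (hNW'.trans hW'W)
  have hKcl : G.IsClique (↑K : Set V) := by
    intro u hu w hw hne
    simp only [hK_def, Finset.coe_insert, Set.mem_insert_iff, Finset.mem_coe] at hu hw
    rcases hu with rfl | hu <;> rcases hw with rfl | hw
    · exact absurd rfl hne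
    · exact hNadj w hw
    · exact (hNadj u hu).symm
    · exact hsimp u (hW'W (hNW' hu)) w (hW'W (hNW' hw)) (hNadj u hu) (hNadj w hw) hne
  have hNcl : G.IsClique (↑N : Set V) := hKcl.subset (by
    rw [hK_def, Finset.coe_insert]; exact Set.subset_insert _ _)
  have herase_sub : ∀ t : Finset V, t ⊆ W → G.IsClique (↑t : Set V) → v ∈ t → t ⊆ K := by
    intro t htW htcl hvt u hut
    by_cases huv : u = v
    · exact huv ▸ Finset.mem_insert_self v N
    · refine Finset.mem_insert.mpr (Or.inr (hNmem u (htW hut) ?_))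
      exact htcl (Finset.mem_coe.mpr hvt) (Finset.mem_coe.mpr hut) (Ne.symm huv)
  have hKmax : IsMaxCliqueWithin G W K := by
    refine ⟨hKW, hKcl, fun t htW htcl hKt => ?_⟩
    exact Finset.Subset.antisymm hKt (herase_sub t htW htcl (hKt (Finset.mem_insert_self v N)))
  have hmax_char : ∀ C : Finset V, IsMaxCliqueWithin G W C ↔
      (C = K ∨ (C ≠ N ∧ IsMaxCliqueWithin G W' C)) := by
    intro C
    constructor
    · intro hC
      obtain ⟨hCW, hCcl, hCmax⟩ := hC
      by_cases hvC : v ∈ C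
      · exact Or.inl (hCmax K hKW hKcl (herase_sub C hCW hCcl hvC))
      · right
        have hCW' : C ⊆ W' := fun u hu =>
          Finset.mem_erase.mpr ⟨fun h => hvC (h ▸ hu), hCW hu⟩
        refine ⟨?_, hCW', hCcl, fun t htW' htcl hCt => hCmax t (htW'.trans hW'W) htcl hCt⟩
        rintro rfl
        have := hCmax K hKW hKcl (Finset.subset_insert v N)
        exact hvC (this ▸ Finset.mem_insert_self v N)
    · rintro (rfl | ⟨hCN, hCW', hCcl, hCmax⟩)
      · exact hKmax
      · have hvC : v ∉ C := fun h => hvW' (hCW' h)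
        refine ⟨hCW'.trans hW'W, hCcl, fun t htW htcl hCt => ?_⟩
        by_cases hvt : v ∈ t
        · exfalso
          have htK : t ⊆ K := herase_sub t htW htcl hvt
          have hCN' : C ⊆ N := fun u hu => by
            rcases Finset.mem_insert.mp (htK (hCt hu)) with rfl | h
            · exact absurd hu hvC
            · exact h
          exact hCN (hCmax N hNW' hNcl hCN')
        · exact hCmax t (fun u hu => Finset.mem_erase.mpr ⟨fun h => hvt (h ▸ hu), htW hu⟩)
            htcl hCt
  have hFsplit : cliquesIn G W = cliquesIn G W' ∪ N.powerset.image (insert v) := by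
    ext s
    rw [Finset.mem_union, mem_cliquesIn, mem_cliquesIn, Finset.mem_image]
    constructor
    · rintro ⟨hsW, hscl⟩
      by_cases hvs : v ∈ s
      · right
        refine ⟨s.erase v, Finset.mem_powerset.mpr ?_, Finset.insert_erase hvs⟩
        intro u hu
        obtain ⟨huv, hus⟩ := Finset.mem_erase.mp hu
        rcases Finset.mem_insert.mp (herase_sub s hsW hscl hvs hus) with h | h
        · exact absurd h huv
        · exact h
      · exact Or.inl ⟨fun u hu => Finset.mem_erase.mpr ⟨fun h => hvs (h ▸ hu), hsW hu⟩, hscl⟩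
    · rintro (⟨hsW', hscl⟩ | ⟨T, hTN, rfl⟩)
      · exact ⟨fun u hu => hW'W (hsW' hu), hscl⟩
      · have hTN' := Finset.mem_powerset.mp hTN
        refine ⟨Finset.insert_subset hvW (fun u hu => hW'W (hNW' (hTN' hu))), ?_⟩
        refine hKcl.subset ?_
        rw [hK_def]
        intro u hu
        simp only [Finset.coe_insert, Set.mem_insert_iff, Finset.mem_coe] at hu ⊢
        rcases hu with rfl | hu
        · exact Or.inl rfl
        · exact Or.inr (hTN' hu)
  have hdisj : Disjoint (cliquesIn G W') (N.powerset.image (insert v)) := by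
    rw [Finset.disjoint_right]
    rintro s hs hs'
    obtain ⟨T, _, rfl⟩ := Finset.mem_image.mp hs
    exact hvW' ((mem_cliquesIn.mp hs').1 (Finset.mem_insert_self v T))
  have hinj : ∀ T₁ ∈ N.powerset, ∀ T₂ ∈ N.powerset, insert v T₁ = insert v T₂ → T₁ = T₂ := by
    intro T₁ h₁ T₂ h₂ h
    have hv₁ : v ∉ T₁ := fun hh => hvN (Finset.mem_powerset.mp h₁ hh)
    have hv₂ : v ∉ T₂ := fun hh => hvN (Finset.mem_powerset.mp h₂ hh)
    rw [← Finset.erase_insert hv₁, ← Finset.erase_insert hv₂, h]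
  have hKcard : K.card = N.card + 1 := Finset.card_insert_of_notMem hvN
  have himg : ∀ x : ℤ, ∑ T ∈ N.powerset, x ^ (insert v T).card = x * (x+1) ^ N.card := by
    intro x
    calc ∑ T ∈ N.powerset, x ^ (insert v T).card
        = ∑ T ∈ N.powerset, x ^ T.card * x := by
          refine Finset.sum_congr rfl fun T hT => ?_
          rw [Finset.card_insert_of_notMem (fun h => hvN (Finset.mem_powerset.mp hT h)),
            pow_succ]
      _ = x * (x+1) ^ N.card := by rw [← Finset.sum_mul, sum_powerset_pow, mul_comm]
  have hMsplit : maxCliquesIn G W = insert K ((maxCliquesIn G W').erase N) := by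
    ext C
    rw [Finset.mem_insert, Finset.mem_erase, mem_maxCliquesIn, mem_maxCliquesIn, hmax_char C]
  have hKnot : K ∉ (maxCliquesIn G W').erase N := by
    intro h
    exact hvW' ((mem_maxCliquesIn.mp (Finset.mem_of_mem_erase h)).1
      (Finset.mem_insert_self v N))
  obtain ⟨S', hS'wit, hS'id⟩ := ih W' (Finset.erase_ssubset hvW)
  have liftpair : ∀ k : ℕ, (∃ C C' : Finset V, IsMaxCliqueWithin G W' C ∧
      IsMaxCliqueWithin G W' C' ∧ C ≠ C' ∧ (C ∩ C').card = k) →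
      ∃ C C' : Finset V, IsMaxCliqueWithin G W C ∧ IsMaxCliqueWithin G W C' ∧
      C ≠ C' ∧ (C ∩ C').card = k := by
    rintro k ⟨C, C', hC, hC', hne, hcard⟩
    have hvC : v ∉ C := fun h => hvW' (hC.1 h)
    have hvC' : v ∉ C' := fun h => hvW' (hC'.1 h)
    have hKint : ∀ D : Finset V, v ∉ D → K ∩ D = N ∩ D := by
      intro D hvD
      ext u
      simp only [Finset.mem_inter, hK_def, Finset.mem_insert]
      constructor
      · rintro ⟨rfl | hu, huD⟩
        · exact absurd huD hvD
        · exact ⟨hu, huD⟩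
      · rintro ⟨hu, huD⟩; exact ⟨Or.inr hu, huD⟩
    by_cases hCN : C = N
    · subst hCN
      refine ⟨K, C', (hmax_char K).mpr (Or.inl rfl),
        (hmax_char C').mpr (Or.inr ⟨fun h => hne h.symm, hC'⟩), ?_, ?_⟩
      · intro h; exact hvC' (h ▸ Finset.mem_insert_self v N)
      · rw [hKint C' hvC']; exact hcard
    · by_cases hC'N : C' = N
      · subst hC'N
        refine ⟨C, K, (hmax_char C).mpr (Or.inr ⟨hCN, hC⟩),
          (hmax_char K).mpr (Or.inl rfl), ?_, ?_⟩
        · intro h; exact hvC (h.symm ▸ Finset.mem_insert_self v N)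
        · rw [Finset.inter_comm, hKint C hvC, Finset.inter_comm]; exact hcard
      · exact ⟨C, C', (hmax_char C).mpr (Or.inr ⟨hCN, hC⟩),
          (hmax_char C').mpr (Or.inr ⟨hC'N, hC'⟩), hne, hcard⟩
  by_cases hNmax : N ∈ maxCliquesIn G W'
  · refine ⟨S', fun k hk => liftpair k (hS'wit k hk), fun x => ?_⟩
    have hid := hS'id x
    have hsub : ∑ C ∈ (maxCliquesIn G W').erase N, ((x+1) ^ C.card) =
        (∑ C ∈ maxCliquesIn G W', (x+1) ^ C.card) - (x+1) ^ N.card := by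
      have := Finset.add_sum_erase (maxCliquesIn G W') (fun C => (x+1) ^ C.card) hNmax
      linarith
    rw [hFsplit, Finset.sum_union hdisj, hMsplit, Finset.sum_insert hKnot, hsub,
      Finset.sum_image hinj, himg x, hid, hKcard, pow_succ]
    ring
  · have hNmax' : ¬ IsMaxCliqueWithin G W' N := fun h => hNmax (mem_maxCliquesIn.mpr h)
    obtain ⟨C₀, hC₀, hNC₀⟩ := exists_max_clique_within W' N hNW' hNcl
    have hC₀N : C₀ ≠ N := fun h => hNmax' (h ▸ hC₀)
    refine ⟨N.card ::ₘ S', ?_, fun x => ?_⟩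
    · intro k hk
      rcases Multiset.mem_cons.mp hk with rfl | hk
      · refine ⟨K, C₀, (hmax_char K).mpr (Or.inl rfl),
          (hmax_char C₀).mpr (Or.inr ⟨hC₀N, hC₀⟩), ?_, ?_⟩
        · intro h; exact hvW' (hC₀.1 (h ▸ Finset.mem_insert_self v N))
        · have hKC₀ : K ∩ C₀ = N := by
            ext u
            simp only [Finset.mem_inter, hK_def, Finset.mem_insert]
            constructor
            · rintro ⟨rfl | hu, huC⟩
              · exact absurd (hC₀.1 huC) hvW'
              · exact hu
            · intro hu; exact ⟨Or.inr hu, hNC₀ hu⟩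
          rw [hKC₀]
      · exact liftpair k (hS'wit k hk)
    · have hid := hS'id x
      rw [hFsplit, Finset.sum_union hdisj, hMsplit, Finset.sum_insert hKnot,
        Finset.erase_eq_of_notMem hNmax, Finset.sum_image hinj, himg x,
        Multiset.map_cons, Multiset.sum_cons, hid, hKcard, pow_succ]
      ring

end StmtAux


/-- Let `G` be a non-complete chordal graph with largest clique size `d` whose clique
complex is pure (all maximal cliques have cardinality `d`). Then
`b (κ̃(G)+1) = b (κ̃(G)+2) = ⋯ = b d`. -/
theorem stmt18 {V : Type} [Fintype V] [DecidableEq V] (G : SimpleGraph V)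
    (hnc : G ≠ ⊤) (hch : IsChordal G)
    (d : ℕ) (hd : ∃ s : Finset V, G.IsNClique d s)
    (hdmax : ∀ (m : ℕ) (s : Finset V), G.IsNClique m s → m ≤ d)
    (hpure : ∀ s : Finset V, IsMaxCliqueOf G s → s.card = d)
    (b : ℕ → ℤ)
    (hb : ∀ x : ℤ, ∑ i ∈ Finset.Icc 1 d, b i * (x + 1) ^ (i - 1) =
      ∑ i ∈ Finset.Icc 1 d, (cliqueCount G i : ℤ) * x ^ (i - 1))
    (i : ℕ) (hi1 : kappaTilde G < i) (hi2 : i ≤ d) :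
    b i = b d := by
    classical
  -- nonempty vertex type
  have hVne : Nonempty V := by
    by_contra h
    rw [not_nonempty_iff] at h
    exact hnc (by ext u v; exact (h.false u).elim)
  have hd1 : 1 ≤ d := by
    obtain ⟨v⟩ := hVne
    exact hdmax 1 {v} ⟨by simp, by simp⟩
  have hmaxequiv : ∀ C : Finset V, IsMaxCliqueWithin G Finset.univ C ↔ IsMaxCliqueOf G C :=
    fun C => ⟨fun ⟨_, hcl, hmax⟩ => ⟨hcl, fun t htcl hsub => hmax t (Finset.subset_univ t) htcl hsub⟩,
      fun ⟨hcl, hmax⟩ => ⟨Finset.subset_univ C, hcl, fun t _ htcl hsub => hmax t htcl hsub⟩⟩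
  obtain ⟨S, hSwit, hSid⟩ := StmtAux.clique_identity hch (Finset.univ : Finset V)
  have hcard : ∀ C ∈ StmtAux.maxCliquesIn G Finset.univ, C.card = d := fun C hC =>
    hpure C ((hmaxequiv C).mp (StmtAux.mem_maxCliquesIn.mp hC))
  set m : ℕ := (StmtAux.maxCliquesIn G Finset.univ).card with hm_def
  have hMsum : ∀ x : ℤ, ∑ C ∈ StmtAux.maxCliquesIn G Finset.univ, (x+1)^C.card = (m : ℤ) * (x+1)^d := by
    intro x
    rw [Finset.sum_congr rfl (fun C hC => by rw [hcard C hC])]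
    rw [Finset.sum_const, nsmul_eq_mul]
  have hκ : ∀ k ∈ S, k ≤ kappaTilde G := by
    intro k hk
    obtain ⟨C, C', hC, hC', hne, hcd⟩ := hSwit k hk
    have hbdd : BddAbove {k | ∃ C C' : Finset V, IsMaxCliqueOf G C ∧ IsMaxCliqueOf G C' ∧
        C ≠ C' ∧ (C ∩ C').card = k} := by
      refine ⟨Fintype.card V, fun j hj => ?_⟩
      obtain ⟨D, D', _, _, _, hcd'⟩ := hj
      rw [← hcd']
      exact le_trans (Finset.card_le_card Finset.inter_subset_left) (Finset.card_le_univ D)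
    exact le_csSup hbdd ⟨C, C', (hmaxequiv C).mp hC, (hmaxequiv C').mp hC', hne, hcd⟩
  -- counting cliques by size
  have hcc : ∀ j : ℕ, (cliqueCount G j : ℤ) =
      (((StmtAux.cliquesIn G Finset.univ).filter (fun s => s.card = j)).card : ℤ) := by
    intro j
    have : {s : Finset V | G.IsNClique j s} =
        ↑((StmtAux.cliquesIn G Finset.univ).filter (fun s => s.card = j)) := by
      ext s
      simp only [Set.mem_setOf_eq, Finset.coe_filter, Finset.mem_coe, StmtAux.mem_cliquesIn,
        SimpleGraph.isNClique_iff]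
      constructor
      · rintro ⟨h1, h2⟩; exact ⟨⟨Finset.subset_univ s, h1⟩, h2⟩
      · rintro ⟨⟨_, h1⟩, h2⟩; exact ⟨h1, h2⟩
    rw [cliqueCount, this, Set.ncard_coe_finset]
  have hfilter0 : (StmtAux.cliquesIn G Finset.univ).filter (fun s => s.card = 0) = {∅} := by
    ext s
    simp only [Finset.mem_filter, Finset.mem_singleton, Finset.card_eq_zero, StmtAux.mem_cliquesIn]
    constructor
    · rintro ⟨_, h⟩; exact h
    · rintro rfl; exact ⟨⟨Finset.subset_univ _, by simp⟩, rfl⟩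
  have hFsum : ∀ x : ℤ, ∑ s ∈ StmtAux.cliquesIn G Finset.univ, x ^ s.card =
      1 + ∑ j ∈ Finset.Icc 1 d, (cliqueCount G j : ℤ) * x ^ j := by
    intro x
    have hmaps : ∀ s ∈ StmtAux.cliquesIn G Finset.univ, s.card ∈ Finset.Icc 0 d := fun s hs =>
      Finset.mem_Icc.mpr ⟨Nat.zero_le _, hdmax s.card s ⟨(StmtAux.mem_cliquesIn.mp hs).2, rfl⟩⟩
    rw [← Finset.sum_fiberwise_of_maps_to hmaps (fun s => x ^ s.card)]
    have hIcc : Finset.Icc 0 d = insert 0 (Finset.Icc 1 d) := by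
      ext j; simp only [Finset.mem_Icc, Finset.mem_insert]; omega
    rw [hIcc, Finset.sum_insert (by simp)]
    congr 1
    · rw [hfilter0]; simp
    · refine Finset.sum_congr rfl fun j hj => ?_
      have : ∀ s ∈ (StmtAux.cliquesIn G Finset.univ).filter (fun s => s.card = j),
          x ^ s.card = x ^ j := fun s hs => by
        rw [(Finset.mem_filter.mp hs).2]
      rw [Finset.sum_congr rfl this, Finset.sum_const, nsmul_eq_mul, hcc j]
  -- the key identity
  have hmain : ∀ x : ℤ, (m : ℤ) * (x+1)^d - (S.map (fun k => (x+1) ^ k)).sum =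
      1 + x * ∑ j ∈ Finset.Icc 1 d, b j * (x + 1) ^ (j - 1) := by
    intro x
    have h1 := hSid x
    rw [hFsum x, hMsum x] at h1
    have h3 : x * ∑ j ∈ Finset.Icc 1 d, (cliqueCount G j : ℤ) * x ^ (j-1) =
        ∑ j ∈ Finset.Icc 1 d, (cliqueCount G j : ℤ) * x ^ j := by
      rw [Finset.mul_sum]
      refine Finset.sum_congr rfl fun j hj => ?_
      have hj1 : 1 ≤ j := (Finset.mem_Icc.mp hj).1
      have : x ^ j = x ^ (j - 1) * x := by
        rw [← pow_succ]
        congr 1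
        omega
      rw [this]
      ring
    rw [← h1, hb x, h3]
  -- polynomial finale
  set B : Polynomial ℤ := ∑ j ∈ Finset.Icc 1 d, Polynomial.C (b j) * Polynomial.X ^ (j-1)
    with hB_def
  set T : Polynomial ℤ := (S.map (fun k => (Polynomial.X : Polynomial ℤ) ^ k)).sum with hT_def
  set P : Polynomial ℤ := Polynomial.C (m : ℤ) * Polynomial.X ^ d - T - 1 -
    (Polynomial.X - 1) * B with hP_def
  have hTeval : ∀ y : ℤ, T.eval y = (S.map (fun k => y ^ k)).sum := by
    intro y
    have h0 : T.eval y =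
        ((S.map fun k => (Polynomial.X : Polynomial ℤ) ^ k).map (Polynomial.eval y)).sum := by
      rw [hT_def]
      exact map_multiset_sum (Polynomial.evalRingHom y) _
    rw [h0, Multiset.map_map]
    congr 1
    refine Multiset.map_congr rfl fun k hk => ?_
    simp
  have hBeval : ∀ y : ℤ, B.eval y = ∑ j ∈ Finset.Icc 1 d, b j * y ^ (j-1) := by
    intro y
    rw [hB_def, Polynomial.eval_finset_sum]
    exact Finset.sum_congr rfl fun j hj => by simp
  have hPeval : ∀ y : ℤ, P.eval y = 0 := by
    intro y
    have h := hmain (y - 1)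
    rw [show y - 1 + 1 = y by ring] at h
    rw [hP_def]
    simp only [Polynomial.eval_sub, Polynomial.eval_mul, Polynomial.eval_pow,
      Polynomial.eval_C, Polynomial.eval_X, Polynomial.eval_one]
    rw [hTeval y, hBeval y]
    linarith [h]
  have hP0 : P = 0 := by
    apply Polynomial.funext
    intro y
    rw [hPeval y, Polynomial.eval_zero]
  have hBcoeff : ∀ j : ℕ, j < d → B.coeff j = b (j+1) := by
    intro j hj
    rw [hB_def, Polynomial.finset_sum_coeff]
    have hterm : ∀ i ∈ Finset.Icc 1 d, (Polynomial.C (b i) * Polynomial.X ^ (i-1)).coeff j =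
        if i = j + 1 then b i else 0 := by
      intro i hi
      have hi1 : 1 ≤ i := (Finset.mem_Icc.mp hi).1
      rw [Polynomial.coeff_C_mul, Polynomial.coeff_X_pow]
      by_cases h : i = j + 1
      · rw [if_pos (by omega : j = i - 1), if_pos h, mul_one]
      · rw [if_neg (by omega : ¬ j = i - 1), if_neg h, mul_zero]
    rw [Finset.sum_congr rfl hterm, Finset.sum_ite_eq' (Finset.Icc 1 d) (j+1)]
    rw [if_pos (Finset.mem_Icc.mpr ⟨by omega, by omega⟩)]
  have hstep : ∀ k : ℕ, kappaTilde G < k → k < d → b k = b (k+1) := by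
    intro k hk1 hk2
    have hk0 : 1 ≤ k := by omega
    have hco : P.coeff k = 0 := by rw [hP0]; simp
    rw [hP_def] at hco
    simp only [Polynomial.coeff_sub] at hco
    have h1 : (Polynomial.C (m:ℤ) * Polynomial.X ^ d).coeff k = 0 := by
      rw [Polynomial.coeff_C_mul, Polynomial.coeff_X_pow, if_neg (by omega : ¬ k = d),
        mul_zero]
    have h2 : T.coeff k = 0 := by
      have h0 : T.coeff k =
          ((S.map fun k' => (Polynomial.X : Polynomial ℤ) ^ k').map
            (fun p => Polynomial.coeff p k)).sum := by
        rw [hT_def]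
        exact map_multiset_sum (Polynomial.lcoeff ℤ k) _
      rw [h0, Multiset.map_map]
      apply Multiset.sum_eq_zero
      intro z hz
      obtain ⟨s', hs', rfl⟩ := Multiset.mem_map.mp hz
      have hs'' : s' ≤ kappaTilde G := hκ s' hs'
      simp only [Function.comp_apply, Polynomial.lcoeff_apply, Polynomial.coeff_X_pow]
      rw [if_neg (by omega : ¬ k = s')]
    have h3 : (1 : Polynomial ℤ).coeff k = 0 := by
      rw [Polynomial.coeff_one, if_neg (by omega : ¬ k = 0)]
    have h4 : ((Polynomial.X - 1) * B).coeff k = b k - b (k+1) := by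
      rw [sub_mul, one_mul, Polynomial.coeff_sub]
      have hx := Polynomial.coeff_X_mul (p := B) (n := k - 1)
      rw [show k - 1 + 1 = k by omega] at hx
      rw [hx, hBcoeff (k-1) (by omega), hBcoeff k (by omega),
        show k - 1 + 1 = k by omega]
    rw [h1, h2, h3, h4] at hco
    linarith
  have chain : ∀ n : ℕ, ∀ j : ℕ, j ≤ d → kappaTilde G < j → d - j = n → b j = b d := by
    intro n
    induction n with
    | zero =>
      intro j h1 h2 h3
      have : j = d := by omega
      rw [this]
    | succ n ihn =>
      intro j h1 h2 h3
      rw [hstep j h2 (by omega)]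
      exact ihn (j+1) (by omega) (by omega) (by omega)
  exact chain (d - i) i hi2 hi1 rfl
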